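/- Let r and s be coprime positive integers and set a_k = r·⌊k(r−s)/r⌋ − k(r−s) ∈ ℤ for k = 1, …, r. Then for all nonzero complex numbers z_1 and z_2: ( Σ_{k=1}^{r} (z_2/z_1)^{a_k} ) · ( Σ_{k=1}^{r} (z_1/z_2)^{a_k} ) · z_1^{r−1} · z_2^{r−1} · (z_1 − z_2)^2 = (z_1^r − z_2^r)^2. -/

import Mathlib

open Finset

/-- The key resummation: the multiset of exponents `a k`, `k ∈ [1,r]`, is
`{0, -1, …, -(r-1)}`, so the sum of `w ^ a k` is a geometric sum in `w⁻¹`. -/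
lemma stmt10_key (r s : ℕ) (hr : 1 ≤ r) (hcop : Nat.Coprime r s)
    (a : ℕ → ℤ)
    (ha : ∀ k, a k =
      (r : ℤ) * ⌊((k : ℚ) * ((r : ℚ) - (s : ℚ))) / (r : ℚ)⌋ - (k : ℤ) * ((r : ℤ) - (s : ℤ)))
    (w : ℂ) (hw : w ≠ 0) :
    ∑ k ∈ Finset.Icc 1 r, w ^ a k = ∑ j ∈ Finset.range r, (w⁻¹) ^ j := by
  have hr0 : (0 : ℤ) < (r : ℤ) := by exact_mod_cast hr
  have ha' : ∀ k : ℕ, a k = -(((k : ℤ) * ((r : ℤ) - (s : ℤ))) % (r : ℤ)) := by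
    intro k
    have hfl := Rat.floor_intCast_div_natCast ((k : ℤ) * ((r : ℤ) - (s : ℤ))) r
    push_cast at hfl
    rw [ha k, hfl, Int.emod_def]
    ring
  -- the map sending k to the (nonneg) residue
  set f : ℕ → ℕ := fun k => (((k : ℤ) * ((r : ℤ) - (s : ℤ))) % (r : ℤ)).toNat with hf
  have hnn : ∀ k : ℕ, (0 : ℤ) ≤ ((k : ℤ) * ((r : ℤ) - (s : ℤ))) % (r : ℤ) :=
    fun k => Int.emod_nonneg _ hr0.ne'
  have hltr : ∀ k : ℕ, ((k : ℤ) * ((r : ℤ) - (s : ℤ))) % (r : ℤ) < (r : ℤ) :=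
    fun k => Int.emod_lt_of_pos _ hr0
  have hfk : ∀ k : ℕ, (f k : ℤ) = ((k : ℤ) * ((r : ℤ) - (s : ℤ))) % (r : ℤ) :=
    fun k => Int.toNat_of_nonneg (hnn k)
  have hmem : ∀ k ∈ Finset.Icc 1 r, f k ∈ Finset.range r := by
    intro k _
    rw [Finset.mem_range]
    have := hltr k
    have := hfk k
    omega
  -- coprimality over ℤ
  have hcz : IsCoprime (r : ℤ) ((r : ℤ) - (s : ℤ)) := by
    have h1 : IsCoprime (r : ℤ) (s : ℤ) := Nat.isCoprime_iff_coprime.mpr hcop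
    have h2 : IsCoprime (r : ℤ) (-(s : ℤ) + (r : ℤ) * 1) := h1.neg_right.add_mul_left_right 1
    convert h2 using 1
    ring
  have hinj : ∀ k₁ ∈ Finset.Icc 1 r, ∀ k₂ ∈ Finset.Icc 1 r, f k₁ = f k₂ → k₁ = k₂ := by
    intro k₁ hk₁ k₂ hk₂ hfe
    rw [Finset.mem_Icc] at hk₁ hk₂
    have hmodeq : ((k₁ : ℤ) * ((r : ℤ) - (s : ℤ))) % (r : ℤ)
        = ((k₂ : ℤ) * ((r : ℤ) - (s : ℤ))) % (r : ℤ) := by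
      have := hfk k₁; have := hfk k₂; omega
    have hdvd : (r : ℤ) ∣ ((k₂ : ℤ) - (k₁ : ℤ)) * ((r : ℤ) - (s : ℤ)) := by
      have := (Int.ModEq.dvd (hmodeq : Int.ModEq (r : ℤ) _ _))
      convert this using 1
      ring
    have hdvd2 : (r : ℤ) ∣ ((k₂ : ℤ) - (k₁ : ℤ)) := hcz.dvd_of_dvd_mul_right hdvd
    have hz : ((k₂ : ℤ) - (k₁ : ℤ)) = 0 := by
      refine Int.eq_zero_of_abs_lt_dvd hdvd2 ?_
      rw [abs_lt]
      constructor <;> [skip; skip] <;> push_cast <;> omega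
    omega
  have hsurj : ∀ b ∈ Finset.range r, ∃ k ∈ Finset.Icc 1 r, f k = b := by
    have hcard : (Finset.range r).card ≤ (Finset.Icc 1 r).card := by
      rw [Finset.card_range, Nat.card_Icc]; omega
    intro b hb
    obtain ⟨k, hk, hbk⟩ :=
      Finset.surj_on_of_inj_on_of_card_le (fun k _ => f k) (fun k hk => hmem k hk)
        (fun k₁ k₂ hk₁ hk₂ h => hinj k₁ hk₁ k₂ hk₂ h) hcard b hb
    exact ⟨k, hk, hbk.symm⟩
  refine Finset.sum_nbij f hmem ?_ ?_ ?_
  · intro k₁ hk₁ k₂ hk₂ h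
    exact hinj k₁ hk₁ k₂ hk₂ h
  · intro b hb
    obtain ⟨k, hk, hbk⟩ := hsurj b hb
    exact ⟨k, hk, hbk⟩
  · intro k _
    rw [ha' k, ← hfk k, zpow_neg, ← zpow_natCast, inv_zpow]
theorem stmt10 (r s : ℕ) (hr : 1 ≤ r) (hs : 1 ≤ s) (hcop : Nat.Coprime r s)
    (a : ℕ → ℤ)
    (ha : ∀ k, a k =
      (r : ℤ) * ⌊((k : ℚ) * ((r : ℚ) - (s : ℚ))) / (r : ℚ)⌋ - (k : ℤ) * ((r : ℤ) - (s : ℤ)))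
    (z1 z2 : ℂ) (h1 : z1 ≠ 0) (h2 : z2 ≠ 0) :
    (∑ k ∈ Finset.Icc 1 r, (z2 / z1) ^ a k) * (∑ k ∈ Finset.Icc 1 r, (z1 / z2) ^ a k)
        * z1 ^ (r - 1) * z2 ^ (r - 1) * (z1 - z2) ^ 2
      = (z1 ^ r - z2 ^ r) ^ 2 := by
  have hS : ∑ k ∈ Finset.Icc 1 r, (z2 / z1) ^ a k
      = ∑ j ∈ Finset.range r, (z1 / z2) ^ j := by
    rw [stmt10_key r s hr hcop a ha (z2 / z1) (div_ne_zero h2 h1), inv_div]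
  have hT : ∑ k ∈ Finset.Icc 1 r, (z1 / z2) ^ a k
      = ∑ j ∈ Finset.range r, (z2 / z1) ^ j := by
    rw [stmt10_key r s hr hcop a ha (z1 / z2) (div_ne_zero h1 h2), inv_div]
  rw [hS, hT]
  have E1 : (∑ j ∈ Finset.range r, (z1 / z2) ^ j) * z2 ^ (r - 1) * (z1 - z2)
      = z1 ^ r - z2 ^ r := by
    rw [← geom_sum₂_mul z1 z2 r, Finset.sum_mul]
    congr 1
    refine Finset.sum_congr rfl fun i hi => ?_
    rw [Finset.mem_range] at hi
    have hp : z2 ^ (r - 1) = z2 ^ i * z2 ^ (r - 1 - i) := by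
      rw [← pow_add]; congr 1; omega
    rw [hp, div_pow, ← mul_assoc, div_mul_cancel₀ _ (pow_ne_zero i h2)]
  have E2 : (∑ j ∈ Finset.range r, (z2 / z1) ^ j) * z1 ^ (r - 1) * (z2 - z1)
      = z2 ^ r - z1 ^ r := by
    rw [← geom_sum₂_mul z2 z1 r, Finset.sum_mul]
    congr 1
    refine Finset.sum_congr rfl fun i hi => ?_
    rw [Finset.mem_range] at hi
    have hp : z1 ^ (r - 1) = z1 ^ i * z1 ^ (r - 1 - i) := by
      rw [← pow_add]; congr 1; omega
    rw [hp, div_pow, ← mul_assoc, div_mul_cancel₀ _ (pow_ne_zero i h1)]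
  linear_combination
    (-((∑ j ∈ Finset.range r, (z2 / z1) ^ j) * z1 ^ (r - 1) * (z2 - z1))) * E1 +
      (-(z1 ^ r - z2 ^ r)) * E2
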